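/- Suppose (𝒳, S, γ, (Λ_a)_{a∈A}) is a spectral decomposition system for a Euclidean space 𝔥 with {Λ_a : a ∈ A} closed in L(𝒳,𝔥). Let φ : 𝒳 → [−∞,+∞] be S-invariant, let x, y ∈ 𝒳, and let a ∈ A. Then y ∈ ∂_F φ(x) if and only if Λ_a y ∈ ∂_F(φ∘γ)(Λ_a x). -/

import Mathlib

open Filter Topology Set Metric
open scoped RealInnerProductSpace

noncomputable section

/-- A spectral decomposition system `(𝒳, S, γ, (Λ_a)_{a ∈ A})` for the space `H`:
`S` acts on `𝒳` by linear isometries (via `act`), `γ : H → 𝒳` is the spectral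
mapping, each `Λ a : 𝒳 → H` is a linear isometry, and the axioms [A], [B], [C] hold,
with `τ` the `S`-invariant ordering mapping of axiom [A]. -/
structure SDS (𝒳 H : Type*) [NormedAddCommGroup 𝒳] [InnerProductSpace ℝ 𝒳]
    [NormedAddCommGroup H] [InnerProductSpace ℝ H]
    (S : Type*) [Group S] (A : Type*) where
  act : S →* (𝒳 ≃ₗᵢ[ℝ] 𝒳)
  γ : H → 𝒳
  Λ : A → 𝒳 →ₗᵢ[ℝ] H
  τ : 𝒳 → 𝒳
  τ_inv : ∀ (s : S) (x : 𝒳), τ (act s x) = τ x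
  τ_orbit : ∀ x : 𝒳, ∃ s : S, τ x = act s x
  γΛ : ∀ (a : A) (x : 𝒳), γ (Λ a x) = τ x
  decomp : ∀ X : H, ∃ a : A, X = Λ a (γ X)
  inner_le : ∀ X Y : H, ⟪X, Y⟫ ≤ ⟪γ X, γ Y⟫

variable {𝒳 H S A : Type*} [NormedAddCommGroup 𝒳] [InnerProductSpace ℝ 𝒳]
    [NormedAddCommGroup H] [InnerProductSpace ℝ H] [Group S]

/-- The set `{Λ_a : a ∈ A}`, regarded as a subset of the space `L(𝒳, H)` of
continuous linear maps with the operator norm. -/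
def SDS.LambdaSet (𝔖 : SDS 𝒳 H S A) : Set (𝒳 →L[ℝ] H) :=
  {L | ∃ a : A, L = (𝔖.Λ a).toContinuousLinearMap}

/-- `A_X = {a ∈ A : X = Λ_a (γ X)}`. -/
def SDS.AX (𝔖 : SDS 𝒳 H S A) (X : H) : Set A := {a | X = 𝔖.Λ a (𝔖.γ X)}

/-- The Fréchet subdifferential of an extended-real-valued `f` at `x`: empty unless
`f x` is finite, in which case it is the set of `y` with
`liminf_{z → x, z ≠ x} (f(z) - f(x) - ⟨z - x, y⟩)/‖z - x‖ ≥ 0`, in ε-δ form. -/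
def fSubdiff {E : Type*} [NormedAddCommGroup E] [InnerProductSpace ℝ E]
    (f : E → EReal) (x : E) : Set E :=
  {y | (∃ r : ℝ, f x = (r : EReal)) ∧ ∀ ε : ℝ, 0 < ε → ∃ δ : ℝ, 0 < δ ∧
    ∀ z : E, ‖z - x‖ < δ → f x + ((⟪z - x, y⟫ - ε * ‖z - x‖ : ℝ) : EReal) ≤ f z}

private lemma le_of_sq_le_sq'' {a b : ℝ} (ha : 0 ≤ a) (hb : 0 ≤ b) (h : a ^ 2 ≤ b ^ 2) :
    a ≤ b := by nlinarith [sq_nonneg (a - b), sq_nonneg (a + b)]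

namespace SDS

variable (𝔖 : SDS 𝒳 H S A)

lemma norm_gamma (X : H) : ‖𝔖.γ X‖ = ‖X‖ := by
  obtain ⟨b, hb⟩ := 𝔖.decomp X
  conv_rhs => rw [hb]
  rw [(𝔖.Λ b).norm_map]

lemma tau_gamma (X : H) : 𝔖.τ (𝔖.γ X) = 𝔖.γ X := by
  obtain ⟨b, hb⟩ := 𝔖.decomp X
  have h := 𝔖.γΛ b (𝔖.γ X)
  rw [← hb] at h
  exact h.symm

lemma inner_tau (a : A) (p q : 𝒳) : ⟪p, q⟫ ≤ ⟪𝔖.τ p, 𝔖.τ q⟫ := by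
  have h := 𝔖.inner_le (𝔖.Λ a p) (𝔖.Λ a q)
  rwa [𝔖.γΛ, 𝔖.γΛ, (𝔖.Λ a).inner_map_map] at h

lemma norm_tau (p : 𝒳) : ‖𝔖.τ p‖ = ‖p‖ := by
  obtain ⟨u, hu⟩ := 𝔖.τ_orbit p
  rw [hu]
  exact (𝔖.act u).norm_map p

lemma tau_lip (a : A) (p q : 𝒳) : ‖𝔖.τ p - 𝔖.τ q‖ ≤ ‖p - q‖ := by
  apply le_of_sq_le_sq'' (norm_nonneg _) (norm_nonneg _)
  have e1 := norm_sub_sq_real (𝔖.τ p) (𝔖.τ q)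
  have e2 := norm_sub_sq_real p q
  have h := 𝔖.inner_tau a p q
  rw [𝔖.norm_tau, 𝔖.norm_tau] at e1
  linarith

lemma phi_tau (φ : 𝒳 → EReal) (hφ : ∀ (s : S) (x : 𝒳), φ (𝔖.act s x) = φ x) (p : 𝒳) :
    φ (𝔖.τ p) = φ p := by
  obtain ⟨u, hu⟩ := 𝔖.τ_orbit p
  rw [hu, hφ]

end SDS

/-- For an `S`-invariant `φ : 𝒳 → [-∞, +∞]`, `x, y ∈ 𝒳` and `a ∈ A`:
`y ∈ ∂_F φ(x)` iff `Λ_a y ∈ ∂_F(φ ∘ γ)(Λ_a x)`. -/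
theorem frechet_subdiff_lambda_iff
    [FiniteDimensional ℝ 𝒳] [FiniteDimensional ℝ H]
    (𝔖 : SDS 𝒳 H S A) (hcl : IsClosed 𝔖.LambdaSet)
    (φ : 𝒳 → EReal) (hφ : ∀ (s : S) (x : 𝒳), φ (𝔖.act s x) = φ x)
    (x y : 𝒳) (a : A) :
    y ∈ fSubdiff φ x ↔ 𝔖.Λ a y ∈ fSubdiff (fun Z => φ (𝔖.γ Z)) (𝔖.Λ a x) := by
  have hγX₀ : 𝔖.γ (𝔖.Λ a x) = 𝔖.τ x := 𝔖.γΛ a x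
  have hFX : φ (𝔖.γ (𝔖.Λ a x)) = φ x := by
    rw [hγX₀, 𝔖.phi_tau φ hφ]
  have hΛxy : ⟪𝔖.Λ a x, 𝔖.Λ a y⟫ = ⟪x, y⟫ := (𝔖.Λ a).inner_map_map x y
  constructor
  · rintro ⟨⟨r, hr⟩, hsub⟩
    refine ⟨⟨r, by show φ (𝔖.γ (𝔖.Λ a x)) = (r : EReal); rw [hFX]; exact hr⟩, fun ε hε => ?_⟩
    obtain ⟨M, hMdef⟩ : ∃ M : ℝ, M = 1 + 4 / ε * ‖y‖ := ⟨_, rfl⟩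
    have hM1 : (1:ℝ) ≤ M := by
      have h0 : 0 ≤ 4 / ε * ‖y‖ := by positivity
      rw [hMdef]; linarith
    have hM0 : (0:ℝ) < M := by linarith
    have hε₂ : 0 < ε / 2 / M := by positivity
    obtain ⟨δ₂, hδ₂, hsub₂⟩ := hsub (ε / 2 / M) hε₂
    refine ⟨δ₂ / M, by positivity, fun Z hZ => ?_⟩
    by_cases hZ0 : Z = 𝔖.Λ a x
    · subst hZ0
      simp
    · set t := ‖Z - 𝔖.Λ a x‖ with htdef
      have ht0 : 0 < t := by
        rw [htdef]
        exact norm_sub_pos_iff.mpr hZ0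
      set ρ := 2 * t / ε with hρdef
      have hρ0 : 0 < ρ := by positivity
      obtain ⟨c, hc⟩ := 𝔖.τ_orbit (x + ρ • y)
      set w := 𝔖.γ Z with hwdef
      set z := 𝔖.act c⁻¹ w with hzdef
      have hφz : φ z = φ w := hφ c⁻¹ w
      have hccw : 𝔖.act c z = w := by
        have h1 : 𝔖.act c * 𝔖.act c⁻¹ = 1 := by
          rw [← map_mul, mul_inv_cancel, map_one]
        calc 𝔖.act c z = (𝔖.act c * 𝔖.act c⁻¹) w := rfl
          _ = w := by rw [h1]; rfl
      have hτw : 𝔖.τ w = w := 𝔖.tau_gamma Z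
      have hnormw : ‖w‖ = ‖Z‖ := 𝔖.norm_gamma Z
      have hnormτx : ‖𝔖.τ x‖ = ‖𝔖.Λ a x‖ := by
        rw [← hγX₀]; exact 𝔖.norm_gamma _
      have hfan0 : ⟪Z, 𝔖.Λ a x⟫ ≤ ⟪w, 𝔖.τ x⟫ := by
        have h := 𝔖.inner_le Z (𝔖.Λ a x)
        rwa [hγX₀, ← hwdef] at h
      have e1 : ‖w - 𝔖.τ x‖ ^ 2 = ‖Z‖ ^ 2 - 2 * ⟪w, 𝔖.τ x⟫ + ‖𝔖.Λ a x‖ ^ 2 := by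
        rw [norm_sub_sq_real, hnormw, hnormτx]
      have e2 : t ^ 2 = ‖Z‖ ^ 2 - 2 * ⟪Z, 𝔖.Λ a x⟫ + ‖𝔖.Λ a x‖ ^ 2 := by
        rw [htdef, norm_sub_sq_real]
      have hκ : ⟪w, 𝔖.τ x⟫ - ⟪Z, 𝔖.Λ a x⟫ ≤ t ^ 2 / 2 := by
        have h0 : (0:ℝ) ≤ ‖w - 𝔖.τ x‖ ^ 2 := sq_nonneg _
        linarith
      have hwτx : ‖w - 𝔖.τ x‖ ≤ t := by
        apply le_of_sq_le_sq'' (norm_nonneg _) ht0.le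
        linarith
      -- the key Fan-type inequality applied to `x + ρ • y`
      have hkey1 : ⟪Z, 𝔖.Λ a x⟫ + ρ * ⟪Z, 𝔖.Λ a y⟫ ≤
          ⟪w, 𝔖.act c x⟫ + ρ * ⟪w, 𝔖.act c y⟫ := by
        have h := 𝔖.inner_le Z (𝔖.Λ a (x + ρ • y))
        rw [𝔖.γΛ, hc, ← hwdef] at h
        simp only [map_add, map_smul, inner_add_right, real_inner_smul_right] at h
        exact h
      have hkey2 : ⟪w, 𝔖.act c x⟫ ≤ ⟪w, 𝔖.τ x⟫ := by
        have h := 𝔖.inner_tau a w (𝔖.act c x)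
        rwa [hτw, 𝔖.τ_inv] at h
      have hρeq : ρ * (ε * t / 4) = t ^ 2 / 2 := by
        rw [hρdef]; field_simp; ring
      have hquot : ⟪Z, 𝔖.Λ a y⟫ ≤ ε * t / 4 + ⟪w, 𝔖.act c y⟫ := by
        have h2 : ρ * ⟪Z, 𝔖.Λ a y⟫ ≤ ρ * (ε * t / 4 + ⟪w, 𝔖.act c y⟫) := by
          rw [mul_add]
          linarith
        exact le_of_mul_le_mul_left h2 hρ0
      -- distance estimate
      have hρy : ‖ρ • y‖ = ρ * ‖y‖ := by
        rw [norm_smul, Real.norm_eq_abs, abs_of_pos hρ0]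
      have hτlip : ‖𝔖.τ x - 𝔖.τ (x + ρ • y)‖ ≤ ρ * ‖y‖ := by
        have h := 𝔖.tau_lip a x (x + ρ • y)
        have h2 : ‖x - (x + ρ • y)‖ = ρ * ‖y‖ := by
          rw [← hρy]; simp [norm_sub_rev]
        linarith
      have hact : ‖𝔖.τ (x + ρ • y) - 𝔖.act c x‖ = ρ * ‖y‖ := by
        rw [hc, ← map_sub, (𝔖.act c).norm_map]
        simp [hρy]
      have hzx : ‖z - x‖ ≤ t + 2 * (ρ * ‖y‖) := by
        have h1 : ‖z - x‖ = ‖w - 𝔖.act c x‖ := by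
          rw [← (𝔖.act c).norm_map (z - x), map_sub, hccw]
        have h2 := norm_sub_le_norm_sub_add_norm_sub w (𝔖.τ x) (𝔖.act c x)
        have h3 := norm_sub_le_norm_sub_add_norm_sub (𝔖.τ x) (𝔖.τ (x + ρ • y)) (𝔖.act c x)
        rw [h1]
        linarith
      have hzxM : ‖z - x‖ ≤ t * M := by
        have heq : t + 2 * (ρ * ‖y‖) = t * M := by
          rw [hρdef, hMdef]; field_simp; ring
        linarith
      have hzxδ : ‖z - x‖ < δ₂ := by
        calc ‖z - x‖ ≤ t * M := hzxM
          _ < (δ₂ / M) * M := by exact mul_lt_mul_of_pos_right hZ hM0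
          _ = δ₂ := by field_simp
      have hsubz := hsub₂ z hzxδ
      have hzy : ⟪z - x, y⟫ = ⟪w, 𝔖.act c y⟫ - ⟪x, y⟫ := by
        rw [inner_sub_left]
        congr 1
        calc ⟪z, y⟫ = ⟪𝔖.act c z, 𝔖.act c y⟫ := ((𝔖.act c).inner_map_map z y).symm
          _ = ⟪w, 𝔖.act c y⟫ := by rw [hccw]
      have hreal : ⟪Z - 𝔖.Λ a x, 𝔖.Λ a y⟫ - ε * t ≤ ⟪z - x, y⟫ - ε / 2 / M * ‖z - x‖ := by
        have hsl : ⟪Z - 𝔖.Λ a x, 𝔖.Λ a y⟫ = ⟪Z, 𝔖.Λ a y⟫ - ⟪x, y⟫ := by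
          rw [inner_sub_left, hΛxy]
        have hεz : ε / 2 / M * ‖z - x‖ ≤ ε / 2 * t := by
          calc ε / 2 / M * ‖z - x‖ ≤ ε / 2 / M * (t * M) :=
                mul_le_mul_of_nonneg_left hzxM hε₂.le
            _ = ε / 2 * t := by field_simp
        have hεt : 0 < ε * t := mul_pos hε ht0
        rw [hsl, hzy]
        linarith
      show φ (𝔖.γ (𝔖.Λ a x)) + ((⟪Z - 𝔖.Λ a x, 𝔖.Λ a y⟫ - ε * t : ℝ) : EReal) ≤ φ w
      calc φ (𝔖.γ (𝔖.Λ a x)) + ((⟪Z - 𝔖.Λ a x, 𝔖.Λ a y⟫ - ε * t : ℝ) : EReal)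
          = φ x + ((⟪Z - 𝔖.Λ a x, 𝔖.Λ a y⟫ - ε * t : ℝ) : EReal) := by rw [hFX]
        _ ≤ φ x + ((⟪z - x, y⟫ - ε / 2 / M * ‖z - x‖ : ℝ) : EReal) := by
            exact add_le_add_right (EReal.coe_le_coe_iff.mpr hreal) _
        _ ≤ φ z := hsubz
        _ = φ w := hφz
  · rintro ⟨⟨r, hr⟩, hsub⟩
    have hr' : φ x = (r : EReal) := by rw [← hFX]; exact hr
    refine ⟨⟨r, hr'⟩, fun ε hε => ?_⟩
    obtain ⟨δ, hδ, hkey⟩ := hsub ε hε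
    refine ⟨δ, hδ, fun z hz => ?_⟩
    have hz' : ‖𝔖.Λ a z - 𝔖.Λ a x‖ < δ := by
      rw [← map_sub, (𝔖.Λ a).norm_map]; exact hz
    have h := hkey (𝔖.Λ a z) hz'
    rw [← map_sub, (𝔖.Λ a).inner_map_map, (𝔖.Λ a).norm_map] at h
    have h2 : φ (𝔖.γ (𝔖.Λ a x)) + ((⟪z - x, y⟫ - ε * ‖z - x‖ : ℝ) : EReal) ≤
        φ (𝔖.γ (𝔖.Λ a z)) := h
    rw [hFX, 𝔖.γΛ, 𝔖.phi_tau φ hφ] at h2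
    exact h2
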